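/- Let τ1, τ2, κ, μ > 0 and let p̃, ẽ, s̃ : (0,∞)×(0,∞) → ℝ be C¹ functions satisfying ∂_v s̃(v,θ) = ∂_θ p̃(v,θ), ∂_θ s̃(v,θ) = (1/θ)∂_θ ẽ(v,θ), and ∂_v ẽ(v,θ) = θ ∂_θ p̃(v,θ) − p̃(v,θ) for all v, θ > 0. Suppose (v,u,θ,q,S) are C¹ real-valued functions of (t,x) on an open subset U of ℝ², with v > 0 and θ > 0 and ∂_θ ẽ(v,θ) − τ1 v q²/(κθ²) > 0 pointwise on U, which satisfy on U the hyperbolic Navier–Stokes system ∂_t v − ∂_x u = 0; ∂_t u + ∂_x p = ∂_x S; ∂_t(e + u²/2) + ∂_x(u p) + ∂_x q = ∂_x(u S); τ1 ∂_t q + q + κ ∂_x θ / v = 0; τ2 ∂_t S + S = μ ∂_x u / v, where p = p̃(v,θ) − τ1 q²/(2κθ) − τ2 S²/(2μ) and e = ẽ(v,θ) + τ1 v q²/(κθ) + τ2 v S²/(2μ). Then, with s := s̃(v,θ) + τ1 v q²/(2κθ²), the relative entropy η := (e + u²/2) − (s − p̃(1,1)(v−1)) − ẽ(1,1) satisfies,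 pointwise on U, the dissipation identity ∂_t η + ∂_x( u(p − p̃(1,1)) + (1 − 1/θ) q − u S ) + v q²/(κθ²) + v S²/(μθ) = 0. -/

import Mathlib

/-- Partial derivative in the first variable (time t, or volume v). -/
noncomputable def d1 (f : ℝ × ℝ → ℝ) (y : ℝ × ℝ) : ℝ := fderiv ℝ f y (1, 0)

/-- Partial derivative in the second variable (space x, or temperature θ). -/
noncomputable def d2 (f : ℝ × ℝ → ℝ) (y : ℝ × ℝ) : ℝ := fderiv ℝ f y (0, 1)

theorem d1_eq' {f : ℝ × ℝ → ℝ} {L : ℝ × ℝ →L[ℝ] ℝ} {y : ℝ × ℝ}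
    (h : HasFDerivAt f L y) : d1 f y = L (1, 0) := by rw [d1, h.fderiv]

theorem d2_eq' {f : ℝ × ℝ → ℝ} {L : ℝ × ℝ →L[ℝ] ℝ} {y : ℝ × ℝ}
    (h : HasFDerivAt f L y) : d2 f y = L (0, 1) := by rw [d2, h.fderiv]

theorem clm_pair (L : ℝ × ℝ →L[ℝ] ℝ) (a b : ℝ) :
    L (a, b) = a * L (1, 0) + b * L (0, 1) := by
  have h : (a, b) = a • ((1:ℝ), (0:ℝ)) + b • ((0:ℝ), (1:ℝ)) := by simp
  rw [h, map_add, map_smul, map_smul, smul_eq_mul, smul_eq_mul]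

set_option maxHeartbeats 2000000 in
/-- for C¹ solutions of the one-dimensional hyperbolic Navier–Stokes
system with Gibbs-compatible constitutive functions, the relative entropy
η = (e + u²/2) − (s − p̃(1,1)(v−1)) − ẽ(1,1) satisfies the dissipation identity
∂_t η + ∂_x( u(p − p̃(1,1)) + (1 − 1/θ) q − u S ) + v q²/(κθ²) + v S²/(μθ) = 0. -/
theorem relative_entropy_dissipation_hyperbolic_NS
    (τ1 τ2 κ μ : ℝ) (hτ1 : 0 < τ1) (hτ2 : 0 < τ2) (hκ : 0 < κ) (hμ : 0 < μ)
    (pt et st : ℝ × ℝ → ℝ)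
    (hpt : ContDiffOn ℝ 1 pt {y : ℝ × ℝ | 0 < y.1 ∧ 0 < y.2})
    (het : ContDiffOn ℝ 1 et {y : ℝ × ℝ | 0 < y.1 ∧ 0 < y.2})
    (hst : ContDiffOn ℝ 1 st {y : ℝ × ℝ | 0 < y.1 ∧ 0 < y.2})
    (hGibbs1 : ∀ y : ℝ × ℝ, 0 < y.1 → 0 < y.2 → d1 st y = d2 pt y)
    (hGibbs2 : ∀ y : ℝ × ℝ, 0 < y.1 → 0 < y.2 → d2 st y = (1 / y.2) * d2 et y)
    (hGibbs3 : ∀ y : ℝ × ℝ, 0 < y.1 → 0 < y.2 → d1 et y = y.2 * d2 pt y - pt y)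
    (U : Set (ℝ × ℝ)) (hU : IsOpen U)
    (v u θ q S : ℝ × ℝ → ℝ)
    (hv : ContDiffOn ℝ 1 v U) (hu : ContDiffOn ℝ 1 u U)
    (hθ : ContDiffOn ℝ 1 θ U) (hq : ContDiffOn ℝ 1 q U) (hS : ContDiffOn ℝ 1 S U)
    (hvpos : ∀ y ∈ U, 0 < v y) (hθpos : ∀ y ∈ U, 0 < θ y)
    (heθpos : ∀ y ∈ U,
      0 < d2 et (v y, θ y) - τ1 * v y * (q y) ^ 2 / (κ * (θ y) ^ 2))
    (hmass : ∀ y ∈ U, d1 v y - d2 u y = 0)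
    (hmom : ∀ y ∈ U,
      d1 u y
        + d2 (fun y' => pt (v y', θ y') - τ1 * (q y') ^ 2 / (2 * κ * θ y')
            - τ2 * (S y') ^ 2 / (2 * μ)) y
      = d2 S y)
    (henergy : ∀ y ∈ U,
      d1 (fun y' => (et (v y', θ y') + τ1 * v y' * (q y') ^ 2 / (κ * θ y')
            + τ2 * v y' * (S y') ^ 2 / (2 * μ)) + (u y') ^ 2 / 2) y
        + d2 (fun y' => u y' * (pt (v y', θ y') - τ1 * (q y') ^ 2 / (2 * κ * θ y')
            - τ2 * (S y') ^ 2 / (2 * μ))) y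
        + d2 q y
      = d2 (fun y' => u y' * S y') y)
    (hcattaneo : ∀ y ∈ U, τ1 * d1 q y + q y + κ * d2 θ y / v y = 0)
    (hmaxwell : ∀ y ∈ U, τ2 * d1 S y + S y = μ * d2 u y / v y) :
    ∀ y ∈ U,
      d1 (fun y' =>
          ((et (v y', θ y') + τ1 * v y' * (q y') ^ 2 / (κ * θ y')
              + τ2 * v y' * (S y') ^ 2 / (2 * μ)) + (u y') ^ 2 / 2)
            - ((st (v y', θ y') + τ1 * v y' * (q y') ^ 2 / (2 * κ * (θ y') ^ 2))
                - pt (1, 1) * (v y' - 1))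
            - et (1, 1)) y
        + d2 (fun y' =>
            u y' * ((pt (v y', θ y') - τ1 * (q y') ^ 2 / (2 * κ * θ y')
                - τ2 * (S y') ^ 2 / (2 * μ)) - pt (1, 1))
              + (1 - 1 / θ y') * q y' - u y' * S y') y
        + v y * (q y) ^ 2 / (κ * (θ y) ^ 2) + v y * (S y) ^ 2 / (μ * θ y) = 0 := by
  intro y hy
  have hΩ : IsOpen {p : ℝ × ℝ | 0 < p.1 ∧ 0 < p.2} :=
    IsOpen.and (isOpen_lt continuous_const continuous_fst)
      (isOpen_lt continuous_const continuous_snd)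
  have hVpos := hvpos y hy
  have hTpos := hθpos y hy
  have hVmem : (v y, θ y) ∈ {p : ℝ × ℝ | 0 < p.1 ∧ 0 < p.2} := ⟨hVpos, hTpos⟩
  have hyU : U ∈ nhds y := hU.mem_nhds hy
  have hVn : {p : ℝ × ℝ | 0 < p.1 ∧ 0 < p.2} ∈ nhds (v y, θ y) := hΩ.mem_nhds hVmem
  have hv' : HasFDerivAt v (fderiv ℝ v y) y :=
    (((hv.differentiableOn one_ne_zero) y hy).differentiableAt hyU).hasFDerivAt
  have hu' : HasFDerivAt u (fderiv ℝ u y) y :=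
    (((hu.differentiableOn one_ne_zero) y hy).differentiableAt hyU).hasFDerivAt
  have hθ' : HasFDerivAt θ (fderiv ℝ θ y) y :=
    (((hθ.differentiableOn one_ne_zero) y hy).differentiableAt hyU).hasFDerivAt
  have hq' : HasFDerivAt q (fderiv ℝ q y) y :=
    (((hq.differentiableOn one_ne_zero) y hy).differentiableAt hyU).hasFDerivAt
  have hS' : HasFDerivAt S (fderiv ℝ S y) y :=
    (((hS.differentiableOn one_ne_zero) y hy).differentiableAt hyU).hasFDerivAt
  have hptc : HasFDerivAt (pt ∘ fun x => (v x, θ x))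
      ((fderiv ℝ pt (v y, θ y)).comp ((fderiv ℝ v y).prod (fderiv ℝ θ y))) y :=
    ((((hpt.differentiableOn one_ne_zero) _ hVmem).differentiableAt hVn).hasFDerivAt).comp y
      (hv'.prodMk hθ')
  have hetc : HasFDerivAt (et ∘ fun x => (v x, θ x))
      ((fderiv ℝ et (v y, θ y)).comp ((fderiv ℝ v y).prod (fderiv ℝ θ y))) y :=
    ((((het.differentiableOn one_ne_zero) _ hVmem).differentiableAt hVn).hasFDerivAt).comp y
      (hv'.prodMk hθ')
  have hstc : HasFDerivAt (st ∘ fun x => (v x, θ x))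
      ((fderiv ℝ st (v y, θ y)).comp ((fderiv ℝ v y).prod (fderiv ℝ θ y))) y :=
    ((((hst.differentiableOn one_ne_zero) _ hVmem).differentiableAt hVn).hasFDerivAt).comp y
      (hv'.prodMk hθ')
  have hT0 : θ y ≠ 0 := ne_of_gt hTpos
  have hκθ : κ * θ y ≠ 0 := by positivity
  have h2κθ : 2 * κ * θ y ≠ 0 := by positivity
  have h2κθ2 : 2 * κ * θ y ^ 2 ≠ 0 := by positivity
  have hq2 := (hasDerivAt_pow 2 (q y)).comp_hasFDerivAt y hq'
  have hS2 := (hasDerivAt_pow 2 (S y)).comp_hasFDerivAt y hS'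
  have hu2 := (hasDerivAt_pow 2 (u y)).comp_hasFDerivAt y hu'
  have hθ2 := (hasDerivAt_pow 2 (θ y)).comp_hasFDerivAt y hθ'
  have i1 := (hasDerivAt_inv hκθ).comp_hasFDerivAt y (hθ'.const_mul κ)
  have i2 := (hasDerivAt_inv h2κθ).comp_hasFDerivAt y (hθ'.const_mul (2*κ))
  have i3 := (hasDerivAt_inv h2κθ2).comp_hasFDerivAt y (hθ2.const_mul (2*κ))
  have iθ := (hasDerivAt_inv hT0).comp_hasFDerivAt y hθ'
  -- pressure p
  have HP := (hptc.sub ((hq2.const_mul τ1).mul i2)).sub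
    ((hS2.const_mul τ2).mul_const ((2*μ))⁻¹)
  -- total energy E
  have HE := ((hetc.add (((hv'.const_mul τ1).mul hq2).mul i1)).add
      (((hv'.const_mul τ2).mul hS2).mul_const ((2*μ))⁻¹)).add (hu2.mul_const ((2:ℝ))⁻¹)
  -- u * p , u * S
  have HuP := hu'.mul HP
  have HuS := hu'.mul hS'
  -- goal part 1
  have HG1 := (HE.sub ((hstc.add (((hv'.const_mul τ1).mul hq2).mul i3)).sub
      ((hv'.sub_const 1).const_mul (pt (1,1))))).sub_const (et (1,1))
  -- goal part 2
  have HG2 := ((hu'.mul (HP.sub_const (pt (1,1)))).add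
      (((hasFDerivAt_const (1:ℝ) y).sub ((hasFDerivAt_const (1:ℝ) y).mul iθ)).mul hq')).sub
      (hu'.mul hS')
  -- scalar derivative equations
  have eP : d2 (fun y' => pt (v y', θ y') - τ1 * (q y') ^ 2 / (2 * κ * θ y')
      - τ2 * (S y') ^ 2 / (2 * μ)) y = _ := d2_eq' HP
  have eE : d1 (fun y' => (et (v y', θ y') + τ1 * v y' * (q y') ^ 2 / (κ * θ y')
      + τ2 * v y' * (S y') ^ 2 / (2 * μ)) + (u y') ^ 2 / 2) y = _ := d1_eq' HE
  have eUP : d2 (fun y' => u y' * (pt (v y', θ y') - τ1 * (q y') ^ 2 / (2 * κ * θ y')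
      - τ2 * (S y') ^ 2 / (2 * μ))) y = _ := d2_eq' HuP
  have eUS : d2 (fun y' => u y' * S y') y = _ := d2_eq' HuS
  have eG1 : d1 (fun y' =>
      ((et (v y', θ y') + τ1 * v y' * (q y') ^ 2 / (κ * θ y')
          + τ2 * v y' * (S y') ^ 2 / (2 * μ)) + (u y') ^ 2 / 2)
        - ((st (v y', θ y') + τ1 * v y' * (q y') ^ 2 / (2 * κ * (θ y') ^ 2))
            - pt (1, 1) * (v y' - 1))
        - et (1, 1)) y = _ := d1_eq' HG1
  have eG2 : d2 (fun y' =>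
      u y' * ((pt (v y', θ y') - τ1 * (q y') ^ 2 / (2 * κ * θ y')
          - τ2 * (S y') ^ 2 / (2 * μ)) - pt (1, 1))
        + (1 - 1 / θ y') * q y' - u y' * S y') y = _ := d2_eq' HG2
  simp only [ContinuousLinearMap.sub_apply, ContinuousLinearMap.smul_apply,
    ContinuousLinearMap.add_apply, ContinuousLinearMap.comp_apply,
    ContinuousLinearMap.prod_apply, ContinuousLinearMap.coe_smul', Pi.smul_apply,
    smul_eq_mul, Function.comp, pow_one, Nat.cast_ofNat,
    ContinuousLinearMap.zero_apply, ContinuousLinearMap.neg_apply,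
    neg_mul, mul_neg, zero_mul, mul_zero, zero_add, add_zero, one_mul, mul_one,
    zero_sub, sub_zero] at eP eE eUP eUS eG1 eG2
  rw [clm_pair (fderiv ℝ pt (v y, θ y))] at eP eUP eG2
  rw [clm_pair (fderiv ℝ et (v y, θ y))] at eE
  rw [clm_pair (fderiv ℝ et (v y, θ y)), clm_pair (fderiv ℝ st (v y, θ y))] at eG1
  -- scalar forms of the hypotheses
  have Hmass := hmass y hy
  have Hmom := hmom y hy
  have Hen := henergy y hy
  have Hcat := hcattaneo y hy
  have Hmax := hmaxwell y hy
  rw [eP] at Hmom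
  rw [eE, eUP, eUS] at Hen
  have G1 := hGibbs1 (v y, θ y) hVpos hTpos
  have G2 := hGibbs2 (v y, θ y) hVpos hTpos
  have G3 := hGibbs3 (v y, θ y) hVpos hTpos
  rw [eG1, eG2]
  simp only [d1, d2] at Hmass Hmom Hen Hcat Hmax G1 G2 G3
  rw [G1, G2, G3]
  rw [G3] at Hen
  norm_num at Hmom Hen ⊢
  linear_combination (norm := (field_simp; ring)) (1 - 1 / θ y) * Hen + (u y / θ y) * Hmom
    + (v y * q y / (κ * θ y ^ 2)) * Hcat + (v y * S y / (μ * θ y)) * Hmax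
    + (pt (1, 1) - (pt (v y, θ y) - τ1 * (q y) ^ 2 / (2 * κ * θ y) - τ2 * (S y) ^ 2 / (2 * μ)) / θ y) * Hmass
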